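/- Let R be a commutative ring, r ∈ R, and C an R-module that is a transfinitely iterated extension in the sense of the projective limit of R-modules D_α (i.e., there is a continuous well-ordered decreasing filtration by quotients with successive kernels D_α). If F is an R-module with Ext^1_R(F, D_α) = 0 for all α, then Ext^1_R(F, C) = 0. -/

import Mathlib

open CategoryTheory

section DualEklofAux

/-- A `ModuleCat` object is a zero object iff its carrier is a subsingleton. -/
lemma DualEklof.isZero_iff_subsingleton {R : Type} [CommRing R] (M : ModuleCat R) :
    Limits.IsZero M ↔ Subsingleton M := by
  constructor
  · intro h
    refine ⟨fun a b => ?_⟩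
    have : (𝟙 M : M ⟶ M) = 0 := h.eq_of_src _ _
    calc a = (𝟙 M : M ⟶ M) a := rfl
    _ = (0 : M ⟶ M) a := by rw [this]
    _ = (0 : M ⟶ M) b := rfl
    _ = (𝟙 M : M ⟶ M) b := by rw [this]
    _ = b := rfl
  · intro h
    exact ModuleCat.isZero_of_subsingleton M

/-- Translation of the vanishing of `Ext¹` into a lifting property along a fixed
projective resolution. -/
lemma DualEklof.subsingleton_ext_iff {R : Type} [CommRing R] (F : Type) [AddCommGroup F]
    [Module R F] (P : ProjectiveResolution (ModuleCat.of R F)) (M : ModuleCat R) :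
    Subsingleton (((Ext R (ModuleCat R) 1).obj (Opposite.op (ModuleCat.of R F))).obj M) ↔
    ∀ g : P.complex.X 1 ⟶ M, P.complex.d 2 1 ≫ g = 0 →
      ∃ h : P.complex.X 0 ⟶ M, P.complex.d 1 0 ≫ h = g := by
  have e := P.isoExt (R := R) 1 M
  set K := P.complex.linearYonedaObj R M with hK
  rw [← DualEklof.isZero_iff_subsingleton]
  have h1 : Limits.IsZero (((Ext R (ModuleCat R) 1).obj (Opposite.op (ModuleCat.of R F))).obj M)
      ↔ Limits.IsZero (K.homology 1) := ⟨fun h => h.of_iso e.symm, fun h => h.of_iso e⟩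
  rw [h1, ← HomologicalComplex.exactAt_iff_isZero_homology,
    K.exactAt_iff' (i := 0) (j := 1) (k := 2) (by simp) (by simp),
    ShortComplex.moduleCat_exact_iff]
  constructor
  · intro h g hg
    obtain ⟨y, hy⟩ := h g hg
    exact ⟨y, hy⟩
  · intro h g hg
    obtain ⟨y, hy⟩ := h g hg
    exact ⟨y, hy⟩

namespace DualEklof

variable {R : Type} [CommRing R] {δ : Ordinal.{0}}
  {C : Ordinal.{0} → Type} [∀ α, AddCommGroup (C α)] [∀ α, Module R (C α)]
  (π : ∀ α β : Ordinal.{0}, α ≤ β → (C β →ₗ[R] C α))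
  {P₀ P₁ : Type} [AddCommGroup P₀] [Module R P₀] [AddCommGroup P₁] [Module R P₁]
  (d : P₁ →ₗ[R] P₀) (g : P₁ →ₗ[R] C δ)

/-- A partial lift of `g` along `d` up to stage `idx` of the tower. -/
structure PL where
  idx : Ordinal.{0}
  le : idx ≤ δ
  f : P₀ →ₗ[R] C idx
  compat : f.comp d = (π idx δ le).comp g

/-- The extension order on partial lifts. -/
def rel (p q : PL π d g) : Prop :=
  ∃ h : p.idx ≤ q.idx, (π p.idx q.idx h).comp q.f = p.f

variable {P₂ : Type} [AddCommGroup P₂] [Module R P₂]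

/-- The Zorn's lemma argument for the dual Eklof lemma: a lift of `g` to `C δ` exists. -/
theorem exists_lift
    (hid : ∀ (α) (h : α ≤ α), π α α h = LinearMap.id)
    (hcomp : ∀ (α β γ : Ordinal.{0}) (h₁ : α ≤ β) (h₂ : β ≤ γ),
      (π α β h₁).comp (π β γ h₂) = π α γ (h₁.trans h₂))
    (hzero : Subsingleton (C 0))
    (hsurj : ∀ α : Ordinal.{0}, α < δ →
      Function.Surjective (π α (α + 1) (le_self_add : α ≤ α + 1)))
    (hlim : ∀ β ≤ δ, Order.IsSuccLimit β →
      ∀ g : ∀ α : {a : Ordinal.{0} // a < β}, C α,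
        (∀ (α₁ α₂ : {a : Ordinal.{0} // a < β}) (h : α₁.1 ≤ α₂.1), π α₁ α₂ h (g α₂) = g α₁) →
        ∃! x : C β, ∀ α : {a : Ordinal.{0} // a < β}, π α β α.2.le x = g α)
    (hproj : Module.Projective R P₀)
    (d₂ : P₂ →ₗ[R] P₁) (hdd : d.comp d₂ = 0) (hg : g.comp d₂ = 0)
    (hD : ∀ (α : Ordinal.{0}) (hα : α < δ)
      (w : P₁ →ₗ[R] LinearMap.ker (π α (α + 1) (le_self_add : α ≤ α + 1))),
      w.comp d₂ = 0 → ∃ u : P₀ →ₗ[R] LinearMap.ker (π α (α + 1) (le_self_add : α ≤ α + 1)),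
        u.comp d = w) :
    ∃ h : P₀ →ₗ[R] C δ, h.comp d = g := by
  classical
  -- transitivity of the extension order
  have rtrans : ∀ {p q s : PL π d g}, rel π d g p q → rel π d g q s → rel π d g p s := by
    rintro p q s ⟨h₁, e₁⟩ ⟨h₂, e₂⟩
    refine ⟨h₁.trans h₂, ?_⟩
    rw [← e₁, ← e₂, ← LinearMap.comp_assoc, hcomp]
  -- coherence of values of members of chains
  have base : PL π d g :=
    ⟨0, (zero_le : 0 ≤ δ), 0, Subsingleton.elim _ _⟩
  -- Zorn's lemma
  obtain ⟨m, hm⟩ : ∃ m : PL π d g, ∀ a, rel π d g m a → rel π d g a m := by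
    refine exists_maximal_of_chains_bounded ?_ (fun {a b c} => rtrans)
    intro c hc
    rcases Set.eq_empty_or_nonempty c with rfl | ⟨p₀, hp₀⟩
    · exact ⟨base, fun a ha => absurd ha (Set.notMem_empty a)⟩
    have hcoh : ∀ p ∈ c, ∀ q ∈ c, ∀ (α : Ordinal.{0}) (h₁ : α ≤ p.idx) (h₂ : α ≤ q.idx)
        (x : P₀), π α p.idx h₁ (p.f x) = π α q.idx h₂ (q.f x) := by
      intro p hp q hq α h₁ h₂ x
      rcases eq_or_ne p q with rfl | hne
      · rfl
      rcases hc hp hq hne with ⟨h, e⟩ | ⟨h, e⟩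
      · conv_lhs => rw [← e]
        exact (LinearMap.congr_fun (hcomp α p.idx q.idx h₁ h) (q.f x))
      · conv_rhs => rw [← e]
        exact (LinearMap.congr_fun (hcomp α q.idx p.idx h₂ h) (p.f x)).symm
    by_cases hmax : ∃ p ∈ c, ∀ q ∈ c, q.idx ≤ p.idx
    · obtain ⟨p, hp, hmax⟩ := hmax
      refine ⟨p, fun q hq => ⟨hmax q hq, ?_⟩⟩
      apply LinearMap.ext; intro x
      have := hcoh q hq p hp q.idx le_rfl (hmax q hq) x
      rw [hid] at this
      exact this.symm
    push_neg at hmax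
    -- the chain has no largest index; glue along the limit ordinal `β`
    set β := sSup (PL.idx '' c) with hβ
    have hbdd : BddAbove (PL.idx '' c) := by
      refine ⟨δ, ?_⟩
      rintro _ ⟨p, hp, rfl⟩
      exact p.le
    have hne : (PL.idx '' c).Nonempty := ⟨p₀.idx, ⟨p₀, hp₀, rfl⟩⟩
    have hβδ : β ≤ δ := csSup_le hne (by rintro _ ⟨p, hp, rfl⟩; exact p.le)
    have hlt : ∀ p ∈ c, p.idx < β := by
      intro p hp
      obtain ⟨q, hq, hpq⟩ := hmax p hp
      exact lt_of_lt_of_le hpq (le_csSup hbdd ⟨q, hq, rfl⟩)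
    have hsup : ∀ α : Ordinal.{0}, α < β → ∃ p ∈ c, α < p.idx := by
      intro α hα
      by_contra hcon
      push_neg at hcon
      exact absurd (csSup_le hne (by rintro _ ⟨p, hp, rfl⟩; exact hcon p hp))
        (not_le.mpr hα)
    have hβlim : Order.IsSuccLimit β := by
      rw [Ordinal.isSuccLimit_iff, Order.isSuccPrelimit_iff_succ_lt]
      constructor
      · intro h0
        exact absurd (h0 ▸ hlt p₀ hp₀) (not_lt_zero)
      · intro a ha
        obtain ⟨p, hp, hap⟩ := hsup a ha
        exact lt_of_le_of_lt (Order.succ_le_of_lt hap) (hlt p hp)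
    -- for every `α < β` pick a member of the chain with larger index
    have pick : ∀ α : {a : Ordinal.{0} // a < β}, ∃ p ∈ c, (α : Ordinal.{0}) < p.idx :=
      fun α => hsup α α.2
    set pc : ∀ α : {a : Ordinal.{0} // a < β}, PL π d g := fun α => (pick α).choose with hpc
    have hpc₁ : ∀ α, pc α ∈ c := fun α => (pick α).choose_spec.1
    have hpc₂ : ∀ α : {a : Ordinal.{0} // a < β}, (α : Ordinal.{0}) < (pc α).idx :=
      fun α => (pick α).choose_spec.2
    set fam : P₀ → ∀ α : {a : Ordinal.{0} // a < β}, C α :=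
      fun x α => π α (pc α).idx (hpc₂ α).le ((pc α).f x) with hfam
    have famcomp : ∀ x : P₀, ∀ (α₁ α₂ : {a : Ordinal.{0} // a < β}) (h : α₁.1 ≤ α₂.1),
        π α₁ α₂ h (fam x α₂) = fam x α₁ := by
      intro x α₁ α₂ h
      have e₁ : π α₁ α₂ h (fam x α₂) = π α₁ (pc α₂).idx (h.trans (hpc₂ α₂).le) ((pc α₂).f x) :=
        LinearMap.congr_fun (hcomp α₁ α₂ (pc α₂).idx h (hpc₂ α₂).le) ((pc α₂).f x)
      rw [e₁]
      exact hcoh (pc α₂) (hpc₁ α₂) (pc α₁) (hpc₁ α₁) α₁ (h.trans (hpc₂ α₂).le) (hpc₂ α₁).le x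
    have hex : ∀ x : P₀, ∃! y : C β, ∀ α : {a : Ordinal.{0} // a < β}, π α β α.2.le y = fam x α :=
      fun x => hlim β hβδ hβlim (fam x) (famcomp x)
    set s : P₀ → C β := fun x => (hex x).choose with hs
    have hs₁ : ∀ x, ∀ α : {a : Ordinal.{0} // a < β}, π α β α.2.le (s x) = fam x α :=
      fun x => (hex x).choose_spec.1
    have hs₂ : ∀ x (y : C β), (∀ α : {a : Ordinal.{0} // a < β}, π α β α.2.le y = fam x α) →
        y = s x := fun x y hy => (hex x).choose_spec.2 y hy
    have hfamadd : ∀ (x y : P₀) (α : {a : Ordinal.{0} // a < β}),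
        fam (x + y) α = fam x α + fam y α := by
      intro x y α; simp [hfam, map_add]
    have hfamsmul : ∀ (r : R) (x : P₀) (α : {a : Ordinal.{0} // a < β}),
        fam (r • x) α = r • fam x α := by
      intro r x α; simp [hfam, map_smul]
    set S : P₀ →ₗ[R] C β :=
      { toFun := s
        map_add' := by
          intro x y
          refine (hs₂ (x + y) (s x + s y) ?_).symm
          intro α
          rw [map_add, hs₁ x α, hs₁ y α, hfamadd]
        map_smul' := by
          intro r x
          refine (hs₂ (r • x) (r • s x) ?_).symm
          intro α
          rw [map_smul, hs₁ x α, hfamsmul] } with hS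
    have Scompat : S.comp d = (π β δ hβδ).comp g := by
      apply LinearMap.ext; intro y
      have : ∀ α : {a : Ordinal.{0} // a < β}, π α β α.2.le (π β δ hβδ (g y)) = fam (d y) α := by
        intro α
        have e₁ : π α β α.2.le (π β δ hβδ (g y)) = π α δ (α.2.le.trans hβδ) (g y) :=
          LinearMap.congr_fun (hcomp α β δ α.2.le hβδ) (g y)
        have e₂ : π α δ (α.2.le.trans hβδ) (g y)
            = π α (pc α).idx (hpc₂ α).le (π (pc α).idx δ (pc α).le (g y)) :=
          (LinearMap.congr_fun (hcomp α (pc α).idx δ (hpc₂ α).le (pc α).le) (g y)).symm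
        have e₃ : π (pc α).idx δ (pc α).le (g y) = (pc α).f (d y) :=
          (LinearMap.congr_fun (pc α).compat y).symm
        rw [e₁, e₂, e₃]
      exact (hs₂ (d y) _ this).symm
    refine ⟨⟨β, hβδ, S, Scompat⟩, fun p hp => ⟨(hlt p hp).le, ?_⟩⟩
    apply LinearMap.ext; intro x
    have e₁ := hs₁ x ⟨p.idx, hlt p hp⟩
    have e₂ : fam x ⟨p.idx, hlt p hp⟩ = p.f x := by
      have := hcoh (pc ⟨p.idx, hlt p hp⟩) (hpc₁ _) p hp p.idx (hpc₂ ⟨p.idx, hlt p hp⟩).le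
        le_rfl x
      rw [hid] at this
      exact this
    exact e₁.trans e₂
  -- the maximal element has index `δ`, else we could extend one more step
  by_cases hmδ : m.idx < δ
  · exfalso
    -- one-step extension using projectivity of `P₀` and vanishing of `Ext¹(F, D_α)`
    have hsucc : m.idx + 1 ≤ δ := by
      rw [Ordinal.add_one_eq_succ]
      exact Order.succ_le_of_lt hmδ
    set q : C (m.idx + 1) →ₗ[R] C m.idx := π m.idx (m.idx + 1) (le_self_add : m.idx ≤ m.idx + 1)
      with hq
    obtain ⟨t, ht⟩ : ∃ t : P₀ →ₗ[R] C (m.idx + 1), q.comp t = m.f :=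
      Module.projective_lifting_property q m.f (hsurj m.idx hmδ)
    set g' : P₁ →ₗ[R] C (m.idx + 1) := (π (m.idx + 1) δ hsucc).comp g with hg'
    set w : P₁ →ₗ[R] C (m.idx + 1) := g' - t.comp d with hw
    have hwker : ∀ y : P₁, w y ∈ LinearMap.ker q := by
      intro y
      rw [LinearMap.mem_ker]
      have e₁ : q (g' y) = π m.idx δ (hsucc.trans' (le_self_add : m.idx ≤ m.idx + 1)) (g y) :=
        LinearMap.congr_fun (hcomp m.idx (m.idx + 1) δ (le_self_add : m.idx ≤ m.idx + 1) hsucc)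
          (g y)
      have e₂ : q (t (d y)) = m.f (d y) := LinearMap.congr_fun ht (d y)
      have e₃ : m.f (d y) = π m.idx δ m.le (g y) := LinearMap.congr_fun m.compat y
      have : q (w y) = q (g' y) - q (t (d y)) := by
        rw [hw, LinearMap.sub_apply, map_sub]
        rfl
      rw [this, e₁, e₂, e₃, sub_eq_zero]
    set w' : P₁ →ₗ[R] LinearMap.ker q := LinearMap.codRestrict (LinearMap.ker q) w hwker
      with hw'
    have hw'd₂ : w'.comp d₂ = 0 := by
      apply LinearMap.ext; intro z
      have e₁ : g (d₂ z) = 0 := LinearMap.congr_fun hg z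
      have e₂ : d (d₂ z) = 0 := LinearMap.congr_fun hdd z
      have hv : w (d₂ z) = 0 := by
        simp [hw, hg', LinearMap.sub_apply, LinearMap.comp_apply, e₁, e₂]
      refine Subtype.ext ?_
      show w (d₂ z) = ((0 : P₂ →ₗ[R] LinearMap.ker q) z : C (m.idx + 1))
      rw [hv]
      rfl
    obtain ⟨u, hu⟩ := hD m.idx hmδ w' hw'd₂
    set hplus : P₀ →ₗ[R] C (m.idx + 1) := t + (LinearMap.ker q).subtype.comp u with hhplus
    have compatplus : hplus.comp d = (π (m.idx + 1) δ hsucc).comp g := by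
      apply LinearMap.ext; intro y
      have e₁ : u (d y) = w' y := LinearMap.congr_fun hu y
      have e₂ : ((w' y : C (m.idx + 1))) = w y := rfl
      simp only [hhplus, LinearMap.comp_apply, LinearMap.add_apply, Submodule.coe_subtype, e₁, e₂]
      rw [hw]
      simp [hg']
    set pplus : PL π d g := ⟨m.idx + 1, hsucc, hplus, compatplus⟩ with hpplus
    have hle : rel π d g m pplus := by
      refine ⟨(le_self_add : m.idx ≤ m.idx + 1), ?_⟩
      apply LinearMap.ext; intro x
      have e₁ : q ((u x : C (m.idx + 1))) = 0 := (u x).2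
      have e₂ : q (t x) = m.f x := LinearMap.congr_fun ht x
      show q (hplus x) = m.f x
      rw [hhplus, LinearMap.add_apply, map_add, LinearMap.comp_apply,
        Submodule.coe_subtype, e₁, e₂]
      simp [e₁]
    obtain ⟨hba, -⟩ := hm pplus hle
    have hlt1 : m.idx < m.idx + 1 := by
      rw [Ordinal.add_one_eq_succ]
      exact Order.lt_succ m.idx
    exact absurd hba (not_le.mpr hlt1)
  · have hmeq : m.idx = δ := le_antisymm m.le (not_lt.mp hmδ)
    have key : ∀ (x : Ordinal.{0}) (hx : x ≤ δ) (f : P₀ →ₗ[R] C x), x = δ →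
        f.comp d = (π x δ hx).comp g → ∃ h : P₀ →ₗ[R] C δ, h.comp d = g := by
      rintro x hx f rfl hf
      exact ⟨f, by rw [hf, hid, LinearMap.id_comp]⟩
    exact key m.idx m.le m.f hmeq m.compat

end DualEklof

end DualEklofAux


/-- dual Eklof lemma.  Let `R` be a commutative ring and `C` an `R`-module
which is a transfinitely iterated extension, in the sense of the projective limit, of
`R`-modules `D_α`: there is an ordinal `δ` and a family of modules `C α` for `α ≤ δ` with
compatible surjective transition maps, `C 0 = 0`, `C δ = C`, the limit condition at limit
ordinals, and `D_α = ker (C (α+1) → C α)`.  If `F` is an `R`-module with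
`Ext¹_R(F, D_α) = 0` for all `α < δ`, then `Ext¹_R(F, C δ) = 0`. -/
theorem ext_vanishes_of_transfinite_inverse_extension
    (R : Type) [CommRing R] (δ : Ordinal.{0})
    (C : Ordinal.{0} → Type) [∀ α, AddCommGroup (C α)] [∀ α, Module R (C α)]
    (π : ∀ α β : Ordinal.{0}, α ≤ β → (C β →ₗ[R] C α))
    (hid : ∀ α, π α α le_rfl = LinearMap.id)
    (hcomp : ∀ (α β γ : Ordinal.{0}) (h₁ : α ≤ β) (h₂ : β ≤ γ),
      (π α β h₁).comp (π β γ h₂) = π α γ (h₁.trans h₂))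
    (hzero : Subsingleton (C 0))
    (hsurj : ∀ α : Ordinal.{0}, α < δ →
      Function.Surjective (π α (α + 1) le_self_add))
    (hlim : ∀ β ≤ δ, Order.IsSuccLimit β →
      ∀ g : ∀ α : {a : Ordinal.{0} // a < β}, C α,
        (∀ (α₁ α₂ : {a : Ordinal.{0} // a < β}) (h : α₁.1 ≤ α₂.1), π α₁ α₂ h (g α₂) = g α₁) →
        ∃! x : C β, ∀ α : {a : Ordinal.{0} // a < β}, π α β α.2.le x = g α)
    (F : Type) [AddCommGroup F] [Module R F]
    (hext : ∀ α : Ordinal.{0}, α < δ →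
      Subsingleton (((Ext R (ModuleCat R) 1).obj (Opposite.op (ModuleCat.of R F))).obj
        (ModuleCat.of R (LinearMap.ker (π α (α + 1) le_self_add))))) :
    Subsingleton (((Ext R (ModuleCat R) 1).obj (Opposite.op (ModuleCat.of R F))).obj
      (ModuleCat.of R (C δ))) := by
  obtain ⟨P⟩ : Nonempty (ProjectiveResolution (ModuleCat.of R F)) := HasProjectiveResolution.out
  rw [DualEklof.subsingleton_ext_iff F P]
  intro g hg
  have hproj : Module.Projective R ↥(P.complex.X 0) :=
    (IsProjective.iff_projective _).mpr (P.projective 0)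
  have hD : ∀ (α : Ordinal.{0}) (hα : α < δ)
      (w : ↥(P.complex.X 1) →ₗ[R] LinearMap.ker (π α (α + 1) (le_self_add : α ≤ α + 1))),
      w.comp (P.complex.d 2 1).hom = 0 →
      ∃ u : ↥(P.complex.X 0) →ₗ[R] LinearMap.ker (π α (α + 1) (le_self_add : α ≤ α + 1)),
        u.comp (P.complex.d 1 0).hom = w := by
    intro α hα w hw
    obtain ⟨u, hu⟩ := (DualEklof.subsingleton_ext_iff F P
      (ModuleCat.of R (LinearMap.ker (π α (α + 1) (le_self_add : α ≤ α + 1))))).mp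
      (hext α hα) (ModuleCat.ofHom w) (ModuleCat.hom_ext hw)
    exact ⟨u.hom, congrArg ModuleCat.Hom.hom hu⟩
  obtain ⟨h, hh⟩ := DualEklof.exists_lift π (P.complex.d 1 0).hom g.hom (fun α h => hid α) hcomp
    hzero hsurj hlim hproj (P.complex.d 2 1).hom
    (by rw [← ModuleCat.hom_comp, P.complex.d_comp_d]; rfl)
    (by rw [← ModuleCat.hom_comp, hg]; rfl) hD
  exact ⟨ModuleCat.ofHom h, ModuleCat.hom_ext hh⟩
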